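/- Let D be a digraph containing a cycle C = w₁→w₂→⋯→w_l→w₁ and a 3-cycle C₁ = u₁→u₂→u₃→u₁ vertex-disjoint from C, such that w_i → u_j for all i ∈ {1,...,l} and j ∈ {1,2,3}. Then for every k ≥ t+1 there are at least t+1 distinct walks of length k from w₁ to u₁. -/

import Mathlib

/-- A walk of length `k` in the digraph with arc relation `A`,
given as its sequence of `k+1` vertices. -/
def IsWalk {V : Type*} (A : V → V → Prop) {k : ℕ} (w : Fin (k+1) → V) : Prop :=
  ∀ i : Fin k, A (w i.castSucc) (w i.succ)

/-- A walk of length `k` from `u` to `v`. -/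
def IsWalkFrom {V : Type*} (A : V → V → Prop) (k : ℕ) (u v : V) (w : Fin (k+1) → V) : Prop :=
  IsWalk A w ∧ w 0 = u ∧ w (Fin.last k) = v

/-- A (directed) cycle of length `m ≥ 1`: a closed walk whose first `m` vertices are distinct. -/
def IsCycle {V : Type*} (A : V → V → Prop) (m : ℕ) (c : Fin (m+1) → V) : Prop :=
  1 ≤ m ∧ IsWalk A c ∧ c (Fin.last m) = c 0 ∧
    Function.Injective (fun i : Fin m => c i.castSucc)

/-- There exist at least `s` pairwise distinct walks of length `k` from `u` to `v`. -/
def HasWalks {V : Type*} (A : V → V → Prop) (k s : ℕ) (u v : V) : Prop :=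
  ∃ f : Fin s → (Fin (k+1) → V), Function.Injective f ∧ ∀ i, IsWalkFrom A k u v (f i)

/-- A cycle `C` with all its vertices dominating a disjoint 3-cycle
`u₁ → u₂ → u₃ → u₁` yields `t+1` distinct walks of every length `k ≥ t+1`
from the first vertex of `C` to `u₁`. -/
theorem stmt_16 {V : Type*} (A : V → V → Prop) (t l : ℕ) (ht : 1 ≤ t)
    (c : Fin (l+1) → V) (hc : IsCycle A l c)
    (u₁ u₂ u₃ : V) (h3 : A u₁ u₂ ∧ A u₂ u₃ ∧ A u₃ u₁)
    (hdistinct : u₁ ≠ u₂ ∧ u₂ ≠ u₃ ∧ u₁ ≠ u₃)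
    (hdisj : ∀ i, c i ≠ u₁ ∧ c i ≠ u₂ ∧ c i ≠ u₃)
    (harc : ∀ i, A (c i) u₁ ∧ A (c i) u₂ ∧ A (c i) u₃)
    (k : ℕ) (hk : t + 1 ≤ k) :
    HasWalks A k (t+1) (c 0) u₁ := by
  classical
  obtain ⟨hl, hwalk, hclose, _⟩ := hc
  set a : ℕ := (3 - k % 3) % 3 with ha
  set uu : ℕ → V := fun n => if n % 3 = 0 then u₁ else if n % 3 = 1 then u₂ else u₃ with huu
  set cc : ℕ → V := fun n => c ⟨n % l, Nat.lt_succ_of_lt (Nat.mod_lt _ hl)⟩ with hcc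
  have huarc : ∀ n, A (uu n) (uu (n+1)) := by
    intro n
    have h : n % 3 = 0 ∨ n % 3 = 1 ∨ n % 3 = 2 := by omega
    rcases h with h | h | h
    · have h' : (n+1) % 3 = 1 := by omega
      simp [huu, h, h']; exact h3.1
    · have h' : (n+1) % 3 = 2 := by omega
      simp [huu, h, h']; exact h3.2.1
    · have h' : (n+1) % 3 = 0 := by omega
      simp [huu, h, h']; exact h3.2.2
  have hcarc : ∀ n, A (cc n) (cc (n+1)) := by
    intro n
    have hm : n % l < l := Nat.mod_lt _ hl
    have key : (n % l + 1) % l = (n+1) % l := Nat.mod_add_mod n l 1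
    by_cases h : n % l + 1 < l
    · have h' : (n+1) % l = n % l + 1 := by rw [← key]; exact Nat.mod_eq_of_lt h
      have := hwalk ⟨n % l, hm⟩
      simpa [hcc, h', Fin.castSucc, Fin.succ] using this
    · have hm' : n % l + 1 = l := by omega
      have h' : (n+1) % l = 0 := by rw [← key, hm', Nat.mod_self]
      have := hwalk ⟨n % l, hm⟩
      have hlast : (⟨n % l, hm⟩ : Fin l).succ = Fin.last l := by
        ext; simp [Fin.succ, hm']
      rw [hlast, hclose] at this
      simp only [hcc, h']
      convert this using 2 <;> simp [Fin.ext_iff]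
  have hcu : ∀ n m, A (cc n) (uu m) := by
    intro n m
    have h : m % 3 = 0 ∨ m % 3 = 1 ∨ m % 3 = 2 := by omega
    rcases h with h | h | h <;> simp [huu, h, hcc]
    · exact (harc _).1
    · exact (harc _).2.1
    · exact (harc _).2.2
  have hne : ∀ n m, cc n ≠ uu m := by
    intro n m
    have h : m % 3 = 0 ∨ m % 3 = 1 ∨ m % 3 = 2 := by omega
    rcases h with h | h | h <;> simp [huu, h, hcc]
    · exact (hdisj _).1
    · exact (hdisj _).2.1
    · exact (hdisj _).2.2
  have hfin : uu (k + a) = u₁ := by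
    have h : (k + a) % 3 = 0 := by omega
    simp [huu, h]
  refine ⟨fun j i => if (i : ℕ) ≤ (j : ℕ) then cc i else uu (i + a), ?_, ?_⟩
  · -- injectivity
    have main : ∀ j j' : Fin (t+1), (j : ℕ) < (j' : ℕ) →
        (fun i : Fin (k+1) => if (i : ℕ) ≤ (j : ℕ) then cc i else uu (i + a)) ≠
        (fun i : Fin (k+1) => if (i : ℕ) ≤ (j' : ℕ) then cc i else uu (i + a)) := by
      intro j j' hlt hjj
      have hj1 : (j : ℕ) + 1 < k + 1 := by
        have := j'.isLt; omega
      have := congrFun hjj (⟨(j : ℕ) + 1, hj1⟩ : Fin (k+1))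
      simp only at this
      rw [if_neg (by show ¬((j:ℕ)+1 ≤ (j:ℕ)); omega),
        if_pos (by show (j:ℕ)+1 ≤ (j':ℕ); omega)] at this
      exact hne _ _ this.symm
    intro j j' hjj
    rcases Nat.lt_trichotomy (j : ℕ) (j' : ℕ) with h | h | h
    · exact absurd hjj (main j j' h)
    · exact Fin.ext h
    · exact absurd hjj.symm (main j' j h)
  · -- each is a walk from c 0 to u₁
    intro j
    refine ⟨?_, ?_, ?_⟩
    · intro i
      dsimp only
      simp only [Fin.coe_castSucc, Fin.val_succ]
      by_cases h1 : (i : ℕ) + 1 ≤ (j : ℕ)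
      · rw [if_pos (by omega), if_pos h1]
        exact hcarc i
      · by_cases h2 : (i : ℕ) ≤ (j : ℕ)
        · rw [if_pos h2, if_neg h1]
          exact hcu _ _
        · rw [if_neg h2, if_neg h1]
          have : (i : ℕ) + 1 + a = ((i : ℕ) + a) + 1 := by ring
          rw [this]
          exact huarc _
    · dsimp only
      rw [if_pos (by simp)]
      simp only [hcc]
      congr 1
    · dsimp only
      rw [if_neg (by simp [Fin.last]; have := j.isLt; omega)]
      simp only [Fin.val_last]
      exact hfin
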